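/- For every integer k ≥ 0 and real numbers x, y, z₁, …, z_k > 0 with x + y + z₁ + ⋯ + z_k < 1, one has q_k(x; y; z₁, …, z_k) = (y/(x+y)) · p_{k+1}(x+y, z₁, …, z_k) − p_{k+2}(y, z₁, …, z_k, 1 − x − y − z₁ − ⋯ − z_k). -/

import Mathlib

/-- ICM probability that given players holding chip fractions `l = [x₁, …, x_k]`
finish 1st through kth in that order:
`p_k(x₁,…,x_k) = (x₁⋯x_k) / ((1-x₁)(1-x₁-x₂)⋯(1-x₁-⋯-x_{k-1}))`. -/
noncomputable def icmP (l : List ℝ) : ℝ :=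
  l.prod / ∏ i ∈ Finset.range (l.length - 1), (1 - ((l.take (i + 1)).sum))

/-- `q_k(x; y; z₁,…,z_k) = Σ_{i=0}^{k} p_{k+2}(y, z₁,…,z_i, x, z_{i+1},…,z_k)`:
the ICM probability that the player with fraction `y` finishes first, players with
fractions `z₁,…,z_k` finish in that relative order among the top `k+2`, and the
player with fraction `x` finishes somewhere among the top `k+2`. -/
noncomputable def icmQ (x y : ℝ) (z : List ℝ) : ℝ :=
  ∑ i ∈ Finset.range (z.length + 1), icmP (y :: (z.take i ++ x :: z.drop i))

lemma icmP_append (l : List ℝ) (b : ℝ) :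
    icmP (l ++ [b]) = icmP l * (b / (1 - l.sum)) := by
  cases l with
  | nil => simp [icmP]
  | cons a t =>
    unfold icmP
    have hlen : ((a :: t) ++ [b]).length - 1 = t.length + 1 := by simp
    have hlen2 : (a :: t).length - 1 = t.length := by simp
    rw [hlen, hlen2, Finset.prod_range_succ]
    have h1 : ∀ i ∈ Finset.range t.length,
        (1 - (((a :: t) ++ [b]).take (i + 1)).sum) = (1 - ((a :: t).take (i + 1)).sum) := by
      intro i hi
      have : i < t.length := Finset.mem_range.mp hi
      rw [List.take_append_of_le_length (by simp; omega)]
    rw [Finset.prod_congr rfl h1]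
    have h2 : (((a :: t) ++ [b]).take (t.length + 1)).sum = (a :: t).sum := by
      rw [List.take_append_of_le_length (by simp : t.length + 1 ≤ (a :: t).length)]
      simp
    rw [h2, List.prod_append, List.prod_singleton, mul_div_mul_comm]

lemma icmQ_append (x y : ℝ) (t : List ℝ) (b : ℝ) :
    icmQ x y (t ++ [b]) = icmQ x y t * (b / (1 - (y + x + t.sum)))
      + icmP (y :: t ++ [b]) * (x / (1 - ((y :: t ++ [b]).sum))) := by
  unfold icmQ
  rw [List.length_append, List.length_singleton, Finset.sum_range_succ]
  congr 1
  · rw [Finset.sum_mul]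
    apply Finset.sum_congr rfl
    intro i hi
    have hile : i ≤ t.length := Nat.lt_succ_iff.mp (Finset.mem_range.mp hi)
    have htake : (t ++ [b]).take i = t.take i :=
      List.take_append_of_le_length hile
    have hdrop : (t ++ [b]).drop i = t.drop i ++ [b] :=
      List.drop_append_of_le_length hile
    rw [htake, hdrop]
    have hl : (y :: (t.take i ++ x :: (t.drop i ++ [b])))
        = (y :: (t.take i ++ x :: t.drop i)) ++ [b] := by simp
    rw [hl, icmP_append]
    have hsum : (y :: (t.take i ++ x :: t.drop i)).sum = y + x + t.sum := by
      have h : (t.take i).sum + (t.drop i).sum = t.sum := by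
        rw [← List.sum_append, List.take_append_drop]
      simp [List.sum_append]
      linarith
    rw [hsum]
  · have htake : (t ++ [b]).take (t.length + 1) = t ++ [b] := by
      apply List.take_of_length_le; simp
    have hdrop : (t ++ [b]).drop (t.length + 1) = [] := by
      apply List.drop_of_length_le; simp
    rw [htake, hdrop]
    have hl : (y :: ((t ++ [b]) ++ [x])) = (y :: (t ++ [b])) ++ [x] := by simp
    rw [hl, icmP_append]
    rfl

lemma icm_list (x y : ℝ) (hx : 0 < x) (hy : 0 < y) :
    ∀ z : List ℝ, (∀ a ∈ z, 0 < a) → x + y + z.sum < 1 →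
    icmQ x y z = y / (x + y) * icmP ((x + y) :: z)
      - icmP (y :: (z ++ [1 - x - y - z.sum])) := by
  intro z
  induction z using List.reverseRecOn with
  | nil =>
    intro _ hs
    simp only [List.sum_nil] at hs ⊢
    simp [icmQ, icmP]
    have h1 : (1 : ℝ) - y ≠ 0 := by linarith
    have h2 : x + y ≠ 0 := by linarith
    field_simp
    ring
  | append_singleton t b ih =>
    intro hpos hs
    have hb : 0 < b := hpos b (by simp)
    have hts : 0 ≤ t.sum := List.sum_nonneg (fun a ha => le_of_lt (hpos a (by simp [ha])))
    rw [List.sum_append, List.sum_singleton] at hs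
    have hs' : x + y + t.sum < 1 := by linarith
    have ih' := ih (fun a ha => hpos a (by simp [ha])) hs'
    rw [icmQ_append, ih']
    have e1 : icmP (y :: (t ++ [1 - x - y - t.sum]))
        = icmP (y :: t) * ((1 - x - y - t.sum) / (1 - (y + t.sum))) := by
      rw [show y :: (t ++ [1 - x - y - t.sum]) = (y :: t) ++ [1 - x - y - t.sum] by simp,
        icmP_append]
      simp only [List.sum_cons]
    have e2 : icmP (y :: t ++ [b]) = icmP (y :: t) * (b / (1 - (y + t.sum))) := by
      rw [show y :: t ++ [b] = (y :: t) ++ [b] by simp, icmP_append]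
      simp only [List.sum_cons]
    have e3 : icmP ((x + y) :: (t ++ [b]))
        = icmP ((x + y) :: t) * (b / (1 - (x + y + t.sum))) := by
      rw [show (x + y) :: (t ++ [b]) = ((x + y) :: t) ++ [b] by simp, icmP_append]
      simp only [List.sum_cons]
    have e4 : icmP (y :: ((t ++ [b]) ++ [1 - x - y - (t ++ [b]).sum]))
        = icmP (y :: t) * (b / (1 - (y + t.sum)))
          * ((1 - x - y - t.sum - b) / (1 - (y + t.sum + b))) := by
      rw [show y :: ((t ++ [b]) ++ [1 - x - y - (t ++ [b]).sum])
          = ((y :: t) ++ [b]) ++ [1 - x - y - (t ++ [b]).sum] by simp,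
        icmP_append, icmP_append]
      simp only [List.sum_cons, List.sum_append, List.sum_singleton, List.sum_nil]
      ring_nf
    rw [e1, e2, e3, e4]
    have hsum1 : (y :: t ++ [b]).sum = y + t.sum + b := by
      simp [List.sum_append]; ring
    rw [hsum1]
    have n1 : (1 : ℝ) - (y + t.sum) ≠ 0 := by nlinarith
    have n2 : (1 : ℝ) - (y + t.sum + b) ≠ 0 := by nlinarith
    have n3 : (1 : ℝ) - (x + y + t.sum) ≠ 0 := by nlinarith
    have n4 : (1 : ℝ) - (y + x + t.sum) ≠ 0 := by nlinarith
    have n5 : x + y ≠ 0 := by nlinarith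
    field_simp
    ring

theorem icm_q_partial_fraction (k : ℕ) (x y : ℝ) (z : Fin k → ℝ)
    (hx : 0 < x) (hy : 0 < y) (hz : ∀ i, 0 < z i)
    (hsum : x + y + ∑ i, z i < 1) :
    icmQ x y (List.ofFn z)
      = y / (x + y) * icmP ((x + y) :: List.ofFn z)
        - icmP (y :: (List.ofFn z ++ [1 - x - y - ∑ i, z i])) := by
  have hsum' : (List.ofFn z).sum = ∑ i, z i := by rw [List.sum_ofFn]
  have := icm_list x y hx hy (List.ofFn z)
    (fun a ha => by
      obtain ⟨i, rfl⟩ := List.mem_ofFn.mp ha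
      exact hz i)
    (by rw [hsum']; exact hsum)
  rw [this, hsum']
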